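/- Let α > 0, ρ > 0, 0 ≤ a < b, and let f : [a^ρ, b^ρ] → ℝ be a positive convex integrable function. Then f((a^ρ+b^ρ)/2) ≤ (ρ^α Γ(α+1)/(2(b^ρ − a^ρ)^α)) [^ρI^α_{a+}(f∘(·)^ρ)(b) + ^ρI^α_{b-}(f∘(·)^ρ)(a)] ≤ (f(a^ρ)+f(b^ρ))/2. -/

import Mathlib

open MeasureTheory intervalIntegral Real

theorem katugampola_hermite_hadamard (a b α ρ : ℝ) (ha : 0 ≤ a) (hab : a < b)
    (hα : 0 < α) (hρ : 0 < ρ) (f : ℝ → ℝ)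
    (hpos : ∀ x ∈ Set.Icc (a ^ ρ) (b ^ ρ), 0 < f x)
    (hconv : ConvexOn ℝ (Set.Icc (a ^ ρ) (b ^ ρ)) f)
    (hint : IntervalIntegrable f volume (a ^ ρ) (b ^ ρ)) :
    f ((a ^ ρ + b ^ ρ) / 2) ≤
      (ρ ^ α * Real.Gamma (α + 1) / (2 * (b ^ ρ - a ^ ρ) ^ α)) *
        ((ρ ^ (1 - α) / Real.Gamma α) *
            (∫ t in a..b, t ^ (ρ - 1) * (b ^ ρ - t ^ ρ) ^ (α - 1) * f (t ^ ρ)) +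
         (ρ ^ (1 - α) / Real.Gamma α) *
            (∫ t in a..b, t ^ (ρ - 1) * (t ^ ρ - a ^ ρ) ^ (α - 1) * f (t ^ ρ))) ∧
    (ρ ^ α * Real.Gamma (α + 1) / (2 * (b ^ ρ - a ^ ρ) ^ α)) *
        ((ρ ^ (1 - α) / Real.Gamma α) *
            (∫ t in a..b, t ^ (ρ - 1) * (b ^ ρ - t ^ ρ) ^ (α - 1) * f (t ^ ρ)) +
         (ρ ^ (1 - α) / Real.Gamma α) *
            (∫ t in a..b, t ^ (ρ - 1) * (t ^ ρ - a ^ ρ) ^ (α - 1) * f (t ^ ρ))) ≤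
      (f (a ^ ρ) + f (b ^ ρ)) / 2 := by
  set A := a ^ ρ with hA
  set B := b ^ ρ with hB
  have hAB : A < B := Real.rpow_lt_rpow ha hab hρ
  have hA0 : 0 ≤ A := Real.rpow_nonneg ha ρ
  have hBA : 0 < B - A := sub_pos.2 hAB
  -- image of Ioc under t ↦ t ^ ρ
  have himg : (fun t : ℝ => t ^ ρ) '' Set.Ioc a b = Set.Ioc A B := by
    ext y
    constructor
    · rintro ⟨t, ⟨hat, htb⟩, rfl⟩
      exact ⟨Real.rpow_lt_rpow ha hat hρ,
        Real.rpow_le_rpow (le_trans ha hat.le) htb hρ.le⟩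
    · rintro ⟨hy1, hy2⟩
      have hy0 : 0 < y := lt_of_le_of_lt hA0 hy1
      refine ⟨y ^ ρ⁻¹, ⟨?_, ?_⟩, Real.rpow_inv_rpow hy0.le hρ.ne'⟩
      · have := Real.rpow_lt_rpow hA0 hy1 (inv_pos.2 hρ)
        rwa [hA, Real.rpow_rpow_inv ha hρ.ne'] at this
      · have hb0 : 0 ≤ b := le_trans ha hab.le
        have := Real.rpow_le_rpow hy0.le hy2 (inv_pos.2 hρ).le
        rwa [hB, Real.rpow_rpow_inv hb0 hρ.ne'] at this
  -- change of variables
  have hsub : ∀ g : ℝ → ℝ,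
      (∫ u in A..B, g u) = ρ * ∫ t in a..b, t ^ (ρ - 1) * g (t ^ ρ) := by
    intro g
    have hderiv : ∀ t ∈ Set.Ioc a b,
        HasDerivWithinAt (fun t : ℝ => t ^ ρ) (ρ * t ^ (ρ - 1)) (Set.Ioc a b) t := by
      intro t ht
      exact (Real.hasDerivAt_rpow_const
        (Or.inl (ne_of_gt (lt_of_le_of_lt ha ht.1)))).hasDerivWithinAt
    have hinj : Set.InjOn (fun t : ℝ => t ^ ρ) (Set.Ioc a b) := by
      intro x hx y hy hxy
      have hx0 : 0 ≤ x := le_trans ha hx.1.le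
      have hy0 : 0 ≤ y := le_trans ha hy.1.le
      have hxy' : x ^ ρ = y ^ ρ := hxy
      have : (x ^ ρ) ^ ρ⁻¹ = (y ^ ρ) ^ ρ⁻¹ := by rw [hxy']
      rwa [Real.rpow_rpow_inv hx0 hρ.ne', Real.rpow_rpow_inv hy0 hρ.ne'] at this
    rw [intervalIntegral.integral_of_le hAB.le, intervalIntegral.integral_of_le hab.le,
      ← himg, MeasureTheory.integral_image_eq_integral_abs_deriv_smul measurableSet_Ioc
        hderiv hinj g]
    rw [show (fun t => |ρ * t ^ (ρ - 1)| • g (t ^ ρ)) =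
        (fun t => |ρ * t ^ (ρ - 1)| • g (t ^ ρ)) from rfl]
    rw [MeasureTheory.setIntegral_congr_fun measurableSet_Ioc
      (g := fun t => ρ * (t ^ (ρ - 1) * g (t ^ ρ))) (fun t ht => by
        have ht0 : 0 < t := lt_of_le_of_lt ha ht.1
        have : (0:ℝ) ≤ ρ * t ^ (ρ - 1) :=
          mul_nonneg hρ.le (Real.rpow_nonneg ht0.le _)
        simp [abs_of_nonneg this, smul_eq_mul, mul_assoc]),
      MeasureTheory.integral_const_mul]
  -- weight integrability
  have hw1 : IntervalIntegrable (fun u => (B - u) ^ (α - 1)) volume A B := by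
    have h := (intervalIntegrable_rpow' (a := B - A) (b := 0)
      (by linarith : (-1:ℝ) < α - 1)).comp_sub_left B
    simpa using h
  have hw2 : IntervalIntegrable (fun u => (u - A) ^ (α - 1)) volume A B := by
    have h := (intervalIntegrable_rpow' (a := 0) (b := B - A)
      (by linarith : (-1:ℝ) < α - 1)).comp_sub_right A
    simpa using h
  -- boundedness of f
  set M := max (f A) (f B) with hM
  have hfle : ∀ u ∈ Set.Icc A B, f u ≤ M := by
    intro u hu
    have := hconv.le_on_segment (Set.left_mem_Icc.2 hAB.le) (Set.right_mem_Icc.2 hAB.le)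
      (by rwa [segment_eq_Icc hAB.le])
    exact this
  have hfpos : ∀ u ∈ Set.Icc A B, 0 < f u := hpos
  -- measurability
  have hfm : AEStronglyMeasurable f (volume.restrict (Set.uIoc A B)) := by
    rw [Set.uIoc_of_le hAB.le]
    exact hint.1.aestronglyMeasurable
  have hw1c : ContinuousOn (fun u : ℝ => (B - u) ^ (α - 1)) (Set.Ioo A B) :=
    (continuousOn_const.sub continuousOn_id).rpow_const
      (fun x hx => Or.inl (sub_ne_zero_of_ne (ne_of_gt hx.2)))
  have hw2c : ContinuousOn (fun u : ℝ => (u - A) ^ (α - 1)) (Set.Ioo A B) :=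
    (continuousOn_id.sub continuousOn_const).rpow_const
      (fun x hx => Or.inl (sub_ne_zero_of_ne (ne_of_gt hx.1)))
  have hfm' : AEStronglyMeasurable f (volume.restrict (Set.Ioo A B)) :=
    hint.1.aestronglyMeasurable.mono_measure
      (Measure.restrict_mono Set.Ioo_subset_Ioc_self le_rfl)
  have hm1 : AEStronglyMeasurable (fun u => (B - u) ^ (α - 1) * f u)
      (volume.restrict (Set.uIoc A B)) := by
    rw [Set.uIoc_of_le hAB.le, ← Measure.restrict_congr_set Ioo_ae_eq_Ioc]
    exact (hw1c.aestronglyMeasurable measurableSet_Ioo).mul hfm'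
  have hm2 : AEStronglyMeasurable (fun u => (u - A) ^ (α - 1) * f u)
      (volume.restrict (Set.uIoc A B)) := by
    rw [Set.uIoc_of_le hAB.le, ← Measure.restrict_congr_set Ioo_ae_eq_Ioc]
    exact (hw2c.aestronglyMeasurable measurableSet_Ioo).mul hfm'
  -- integrability of the products
  have hg1 : IntervalIntegrable (fun u => (B - u) ^ (α - 1) * f u) volume A B := by
    refine (hw1.const_mul M).mono_fun' hm1 ?_
    refine ae_restrict_of_forall_mem measurableSet_uIoc ?_
    intro u hu
    rw [Set.uIoc_of_le hAB.le] at hu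
    have hu' : u ∈ Set.Icc A B := Set.Ioc_subset_Icc_self hu
    have hw : (0:ℝ) ≤ (B - u) ^ (α - 1) := Real.rpow_nonneg (by linarith [hu'.2]) _
    have h1 := hfpos u hu'
    have h2 := hfle u hu'
    simp only [Real.norm_eq_abs]
    rw [abs_of_nonneg (mul_nonneg hw h1.le)]
    nlinarith
  have hg2 : IntervalIntegrable (fun u => (u - A) ^ (α - 1) * f u) volume A B := by
    refine (hw2.const_mul M).mono_fun' hm2 ?_
    refine ae_restrict_of_forall_mem measurableSet_uIoc ?_
    intro u hu
    rw [Set.uIoc_of_le hAB.le] at hu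
    have hu' : u ∈ Set.Icc A B := Set.Ioc_subset_Icc_self hu
    have hw : (0:ℝ) ≤ (u - A) ^ (α - 1) := Real.rpow_nonneg (by linarith [hu'.1]) _
    have h1 := hfpos u hu'
    have h2 := hfle u hu'
    simp only [Real.norm_eq_abs]
    rw [abs_of_nonneg (mul_nonneg hw h1.le)]
    nlinarith
  have hg3 : IntervalIntegrable (fun u => (B - u) ^ (α - 1) * f (A + B - u)) volume A B := by
    have h := (hg2.comp_sub_left (A + B)).symm
    have he : (fun x => ((A + B - x) - A) ^ (α - 1) * f (A + B - x)) =
        (fun x => (B - x) ^ (α - 1) * f (A + B - x)) := by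
      funext x; rw [show A + B - x - A = B - x by ring]
    rw [he] at h
    simpa using h
  -- symmetry of the reflected integral
  have hsym : (∫ u in A..B, (B - u) ^ (α - 1) * f (A + B - u)) =
      ∫ u in A..B, (u - A) ^ (α - 1) * f u := by
    have h := intervalIntegral.integral_comp_sub_left (a := A) (b := B)
      (fun u => (u - A) ^ (α - 1) * f u) (A + B)
    simp only [add_sub_cancel_right, add_sub_cancel_left] at h
    rw [← h]
    congr 1
    funext x
    rw [show A + B - x - A = B - x by ring]
  -- weight integrals
  have hW1 : (∫ u in A..B, (B - u) ^ (α - 1)) = (B - A) ^ α / α := by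
    rw [intervalIntegral.integral_comp_sub_left (fun x : ℝ => x ^ (α - 1)) B]
    rw [sub_self]
    rw [integral_rpow (Or.inl (by linarith))]
    rw [Real.zero_rpow (by linarith : α - 1 + 1 ≠ 0), show α - 1 + 1 = α by ring, sub_zero]
  have hW2 : (∫ u in A..B, (u - A) ^ (α - 1)) = (B - A) ^ α / α := by
    rw [intervalIntegral.integral_comp_sub_right (fun x : ℝ => x ^ (α - 1)) A]
    rw [sub_self]
    rw [integral_rpow (Or.inl (by linarith))]
    rw [Real.zero_rpow (by linarith : α - 1 + 1 ≠ 0), show α - 1 + 1 = α by ring, sub_zero]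
  have hmem : ∀ u ∈ Set.Icc A B, A + B - u ∈ Set.Icc A B := by
    intro u hu
    exact ⟨by linarith [hu.2], by linarith [hu.1]⟩
  set I1 := ∫ u in A..B, (B - u) ^ (α - 1) * f u with hI1
  set I2 := ∫ u in A..B, (u - A) ^ (α - 1) * f u with hI2
  -- lower bound
  have hlow : 2 * f ((A + B) / 2) * ((B - A) ^ α / α) ≤ I1 + I2 := by
    have key : (∫ u in A..B, 2 * f ((A + B) / 2) * (B - u) ^ (α - 1)) ≤
        ∫ u in A..B, ((B - u) ^ (α - 1) * f u + (B - u) ^ (α - 1) * f (A + B - u)) := by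
      refine intervalIntegral.integral_mono_on hAB.le (hw1.const_mul _) (hg1.add hg3) ?_
      intro u hu
      have hw : (0:ℝ) ≤ (B - u) ^ (α - 1) := Real.rpow_nonneg (by linarith [hu.2]) _
      have h2 := hconv.2 hu (hmem u hu) (by norm_num : (0:ℝ) ≤ 1/2)
        (by norm_num : (0:ℝ) ≤ 1/2) (by norm_num)
      simp only [smul_eq_mul] at h2
      rw [show (1/2 : ℝ) * u + 1/2 * (A + B - u) = (A + B) / 2 by ring] at h2
      nlinarith [mul_le_mul_of_nonneg_left h2 hw]
    rw [intervalIntegral.integral_const_mul, hW1,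
      intervalIntegral.integral_add hg1 hg3, hsym] at key
    exact key
  -- upper bound
  have hsum : ∀ u ∈ Set.Icc A B, f u + f (A + B - u) ≤ f A + f B := by
    intro u hu
    set lam := (B - u) / (B - A) with hlam
    set mu := (u - A) / (B - A) with hmu
    have hl : 0 ≤ lam := div_nonneg (by linarith [hu.2]) hBA.le
    have hm : 0 ≤ mu := div_nonneg (by linarith [hu.1]) hBA.le
    have hlm : lam + mu = 1 := by rw [hlam, hmu]; field_simp; ring
    have h1 := hconv.2 (Set.left_mem_Icc.2 hAB.le) (Set.right_mem_Icc.2 hAB.le) hl hm hlm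
    have h2 := hconv.2 (Set.left_mem_Icc.2 hAB.le) (Set.right_mem_Icc.2 hAB.le) hm hl
      (by linarith)
    simp only [smul_eq_mul] at h1 h2
    have e1 : lam * A + mu * B = u := by rw [hlam, hmu]; field_simp; ring
    have e2 : mu * A + lam * B = A + B - u := by rw [hlam, hmu]; field_simp; ring
    rw [e1] at h1; rw [e2] at h2
    have e3 : lam * f A + mu * f B + (mu * f A + lam * f B) = f A + f B := by
      linear_combination (f A + f B) * hlm
    linarith
  have hup : I1 + I2 ≤ (f A + f B) * ((B - A) ^ α / α) := by
    have key : (∫ u in A..B, ((B - u) ^ (α - 1) * f u + (B - u) ^ (α - 1) * f (A + B - u))) ≤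
        ∫ u in A..B, (f A + f B) * (B - u) ^ (α - 1) := by
      refine intervalIntegral.integral_mono_on hAB.le (hg1.add hg3) (hw1.const_mul _) ?_
      intro u hu
      have hw : (0:ℝ) ≤ (B - u) ^ (α - 1) := Real.rpow_nonneg (by linarith [hu.2]) _
      nlinarith [mul_le_mul_of_nonneg_left (hsum u hu) hw]
    rw [intervalIntegral.integral_const_mul, hW1,
      intervalIntegral.integral_add hg1 hg3, hsym] at key
    exact key
  -- rewrite the Katugampola integrals
  have hJ1 : (∫ t in a..b, t ^ (ρ - 1) * (B - t ^ ρ) ^ (α - 1) * f (t ^ ρ)) = I1 / ρ := by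
    have h := hsub (fun u => (B - u) ^ (α - 1) * f u)
    rw [hI1, h, mul_div_cancel_left₀ _ hρ.ne']
    simp_rw [mul_assoc]
  have hJ2 : (∫ t in a..b, t ^ (ρ - 1) * (t ^ ρ - A) ^ (α - 1) * f (t ^ ρ)) = I2 / ρ := by
    have h := hsub (fun u => (u - A) ^ (α - 1) * f u)
    rw [hI2, h, mul_div_cancel_left₀ _ hρ.ne']
    simp_rw [mul_assoc]
  rw [hJ1, hJ2]
  -- arithmetic
  have hGamma : Real.Gamma (α + 1) = α * Real.Gamma α := Real.Gamma_add_one hα.ne'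
  have hGpos : 0 < Real.Gamma α := Real.Gamma_pos_of_pos hα
  have hρpow : ρ ^ α * ρ ^ (1 - α) = ρ := by
    rw [← Real.rpow_add hρ]; norm_num
  have hPpos : 0 < (B - A) ^ α := Real.rpow_pos_of_pos hBA α
  have hE : (ρ ^ α * Real.Gamma (α + 1) / (2 * (B - A) ^ α)) *
      ((ρ ^ (1 - α) / Real.Gamma α) * (I1 / ρ) +
       (ρ ^ (1 - α) / Real.Gamma α) * (I2 / ρ)) = α * (I1 + I2) / (2 * (B - A) ^ α) := by
    rw [hGamma]
    field_simp
    linear_combination (I1 + I2) * hρpow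
  rw [hE]
  constructor
  · rw [le_div_iff₀ (by positivity)]
    have hq : f ((A + B) / 2) * (2 * (B - A) ^ α) =
        α * (2 * f ((A + B) / 2) * ((B - A) ^ α / α)) := by
      field_simp
    rw [hq]
    exact mul_le_mul_of_nonneg_left hlow hα.le
  · rw [div_le_iff₀ (by positivity)]
    have hq2 : (f A + f B) / 2 * (2 * (B - A) ^ α) =
        α * ((f A + f B) * ((B - A) ^ α / α)) := by
      field_simp
    rw [hq2]
    exact mul_le_mul_of_nonneg_left hup hα.le
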